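/- Let G be a graph whose complementary graph G^c is chordal with exactly three facets F, F', F'' in its clique complex, forming a leaf order in that order. Then this leaf order is sensitive if and only if F ∩ F' ≠ ∅ and (F ∪ F') ∩ F'' ≠ ∅. -/
import Mathlib


open Finset

attribute [local instance] Classical.propDecidable

variable {n : ℕ}

/-- A graph is chordal if every cycle of length greater than 3 has a chord. -/
def IsChordal {α : Type} (G : SimpleGraph α) : Prop :=
  ∀ (v : α) (w : G.Walk v v), w.IsCycle → 3 < w.length →
    ∃ a ∈ w.support, ∃ b ∈ w.support, G.Adj a b ∧ s(a, b) ∉ w.edges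

/-- The clique complex of a graph. -/
def cliqueCx (G : SimpleGraph (Fin n)) : Set (Finset (Fin n)) :=
  {s | G.IsClique (↑s : Set (Fin n))}

/-- `F` is a facet (maximal face) of the simplicial complex `Δ`. -/
def IsFacet (Δ : Set (Finset (Fin n))) (F : Finset (Fin n)) : Prop :=
  F ∈ Δ ∧ ∀ s ∈ Δ, F ⊆ s → s = F

/-- The subcomplex `⟨F_1, …, F_i⟩` generated by the facets `F j` for `j ≤ i`. -/
def gen (q : ℕ) (F : Fin q → Finset (Fin n)) (i : Fin q) : Set (Finset (Fin n)) :=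
  {s | ∃ j ≤ i, s ⊆ F j}

/-- `B` is a branch of the facet `Fc` in `Δ`. -/
def IsBranch (Δ : Set (Finset (Fin n))) (Fc B : Finset (Fin n)) : Prop :=
  IsFacet Δ B ∧ B ≠ Fc ∧ ∀ H, IsFacet Δ H → H ≠ Fc → H ∩ Fc ⊆ B ∩ Fc

/-- `Fc` is a leaf of `Δ`: a facet admitting a branch. -/
def IsLeaf (Δ : Set (Finset (Fin n))) (Fc : Finset (Fin n)) : Prop :=
  IsFacet Δ Fc ∧ ∃ B, IsBranch Δ Fc B

/-- `F : Fin q → Finset (Fin n)` is a leaf order of `Δ`. -/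
def IsLeafOrder (Δ : Set (Finset (Fin n))) (q : ℕ) (F : Fin q → Finset (Fin n)) : Prop :=
  Function.Injective F ∧ (∀ i, IsFacet Δ (F i)) ∧ (∀ s, IsFacet Δ s → ∃ i, F i = s) ∧
    ∀ i : Fin q, 0 < (i : ℕ) → IsLeaf (gen q F i) (F i)

/-- A leaf order is sensitive if each `F_i` (`i > 1`) has a unique branch `G_i` in
`⟨F_1, …, F_i⟩` and the intersections `G_i ∩ F_i` are pairwise incomparable. -/
def IsSensitive (q : ℕ) (F : Fin q → Finset (Fin n)) : Prop :=
  (∀ i : Fin q, 0 < (i : ℕ) → ∃! B, IsBranch (gen q F i) (F i) B) ∧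
    ∀ i j : Fin q, ∀ Bi Bj, 0 < (i : ℕ) → 0 < (j : ℕ) → i ≠ j →
      IsBranch (gen q F i) (F i) Bi → IsBranch (gen q F j) (F j) Bj →
        ¬ (Bi ∩ F i ⊆ Bj ∩ F j)


lemma exists_facet_superset (Δ : Set (Finset (Fin n))) {s : Finset (Fin n)} (hs : s ∈ Δ) :
    ∃ t, IsFacet Δ t ∧ s ⊆ t := by
  classical
  set S : Finset (Finset (Fin n)) := Finset.univ.filter (fun t => t ∈ Δ ∧ s ⊆ t) with hS
  have hsS : s ∈ S := by simp [hS, hs]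
  obtain ⟨t, htS, hmax⟩ := S.exists_max_image (fun u => u.card) ⟨s, hsS⟩
  simp only [hS, Finset.mem_filter, Finset.mem_univ, true_and] at htS
  refine ⟨t, ⟨htS.1, ?_⟩, htS.2⟩
  intro u hu htu
  have huS : u ∈ S := by simp [hS, hu, htS.2.trans htu]
  exact (Finset.eq_of_subset_of_card_le htu (hmax u huS)).symm

/-- Let `G` be a graph whose complementary graph `Gᶜ` is chordal and whose clique complex
`Δ(Gᶜ)` has exactly the three facets `F, F', F''`, forming a leaf order in that order.
Then this leaf order is sensitive if and only if `F ∩ F' ≠ ∅` and `(F ∪ F') ∩ F'' ≠ ∅`. -/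
theorem sensitive_iff_of_three_facets (G : SimpleGraph (Fin n))
    (hG : ∀ v, ∃ w, G.Adj v w) (hchordal : IsChordal Gᶜ)
    (F F' F'' : Finset (Fin n)) (hne : F ≠ F' ∧ F ≠ F'' ∧ F' ≠ F'')
    (hfacets : ∀ s, IsFacet (cliqueCx Gᶜ) s ↔ s = F ∨ s = F' ∨ s = F'')
    (hord : IsLeafOrder (cliqueCx Gᶜ) 3 ![F, F', F'']) :
    IsSensitive 3 ![F, F', F''] ↔ F ∩ F' ≠ ∅ ∧ (F ∪ F') ∩ F'' ≠ ∅ := by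
  have e0 : (![F, F', F''] : Fin 3 → Finset (Fin n)) 0 = F := rfl
  have e1 : (![F, F', F''] : Fin 3 → Finset (Fin n)) 1 = F' := rfl
  have e2 : (![F, F', F''] : Fin 3 → Finset (Fin n)) 2 = F'' := rfl
  have hFfacet : IsFacet (cliqueCx Gᶜ) F := (hfacets F).mpr (Or.inl rfl)
  have hcover : ∀ v : Fin n, v ∈ F ∨ v ∈ F' ∨ v ∈ F'' := by
    intro v
    have hv : ({v} : Finset (Fin n)) ∈ cliqueCx Gᶜ := by
      simp only [cliqueCx, Set.mem_setOf_eq, Finset.coe_singleton]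
      exact SimpleGraph.isClique_singleton _
    obtain ⟨t, ht, hvt⟩ := exists_facet_superset _ hv
    have hvmem : v ∈ t := hvt (Finset.mem_singleton_self v)
    rcases (hfacets t).mp ht with rfl | rfl | rfl <;> tauto
  have htriple : ∀ v, v ∈ F → v ∈ F' → v ∈ F'' → False := by
    intro v h1 h2 h3
    obtain ⟨w, hw⟩ := hG v
    have hvw : v ≠ w := hw.ne
    have hnotc : ¬ Gᶜ.Adj v w := by
      simp [SimpleGraph.compl_adj, hvw, hw]
    apply hnotc
    rcases hcover w with h | h | h
    · exact hFfacet.1 h1 h hvw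
    · exact ((hfacets F').mpr (Or.inr (Or.inl rfl))).1 h2 h hvw
    · exact ((hfacets F'').mpr (Or.inr (Or.inr rfl))).1 h3 h hvw
  have hFFfacet : ∀ (i k : Fin 3), k ≤ i →
      IsFacet (gen 3 ![F, F', F''] i) (![F, F', F''] k) := by
    intro i k hk
    refine ⟨⟨k, hk, subset_rfl⟩, ?_⟩
    rintro s ⟨j, hj, hsub⟩ hks
    have hj2 : ![F, F', F''] j ∈ cliqueCx Gᶜ := (hord.2.1 j).1
    have heq : ![F, F', F''] j = ![F, F', F''] k := (hord.2.1 k).2 _ hj2 (hks.trans hsub)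
    exact Finset.Subset.antisymm (hsub.trans (le_of_eq heq)) hks
  have hclass : ∀ (i : Fin 3) B, IsFacet (gen 3 ![F, F', F''] i) B →
      ∃ k, k ≤ i ∧ B = ![F, F', F''] k := by
    intro i B hB
    obtain ⟨j, hj, hsub⟩ := hB.1
    exact ⟨j, hj, (hB.2 _ ⟨j, hj, subset_rfl⟩ hsub).symm⟩
  have hbr1 : IsBranch (gen 3 ![F, F', F''] 1) F' F := by
    refine ⟨hFFfacet 1 0 (by decide), hne.1, ?_⟩
    intro H hH hHne
    obtain ⟨k, hk, rfl⟩ := hclass 1 H hH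
    fin_cases k
    · exact subset_rfl
    · exact absurd rfl hHne
    · exact absurd hk (by decide)
  have hbr1u : ∀ B, IsBranch (gen 3 ![F, F', F''] 1) F' B → B = F := by
    intro B hB
    obtain ⟨k, hk, rfl⟩ := hclass 1 B hB.1
    fin_cases k
    · rfl
    · exact absurd rfl hB.2.1
    · exact absurd hk (by decide)
  have hbr2 : ∀ B, IsBranch (gen 3 ![F, F', F''] 2) F'' B →
      (B = F ∨ B = F') ∧ (F ∪ F') ∩ F'' ⊆ B ∩ F'' ∧
        F ∩ F'' ⊆ B ∩ F'' ∧ F' ∩ F'' ⊆ B ∩ F'' := by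
    intro B hB
    have h1 : F ∩ F'' ⊆ B ∩ F'' := hB.2.2 F (hFFfacet 2 0 (by decide)) hne.2.1
    have h2 : F' ∩ F'' ⊆ B ∩ F'' := hB.2.2 F' (hFFfacet 2 1 (by decide)) hne.2.2
    refine ⟨?_, ?_, h1, h2⟩
    · obtain ⟨k, hk, rfl⟩ := hclass 2 B hB.1
      fin_cases k
      · exact Or.inl rfl
      · exact Or.inr rfl
      · exact absurd rfl hB.2.1
    · intro x hx
      rw [Finset.mem_inter, Finset.mem_union] at hx
      rcases hx with ⟨h | h, hxF''⟩
      · exact h1 (Finset.mem_inter.mpr ⟨h, hxF''⟩)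
      · exact h2 (Finset.mem_inter.mpr ⟨h, hxF''⟩)
  have hkey : F ∩ F'' = F' ∩ F'' → (F ∪ F') ∩ F'' = ∅ := by
    intro hEq
    rw [Finset.eq_empty_iff_forall_notMem]
    intro x hx
    rw [Finset.mem_inter, Finset.mem_union] at hx
    rcases hx with ⟨h | h, hf⟩
    · have hx' : x ∈ F' ∩ F'' := hEq ▸ (Finset.mem_inter.mpr ⟨h, hf⟩)
      exact htriple x h (Finset.mem_inter.mp hx').1 hf
    · have hx' : x ∈ F ∩ F'' := hEq.symm ▸ (Finset.mem_inter.mpr ⟨h, hf⟩)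
      exact htriple x (Finset.mem_inter.mp hx').1 h hf
  constructor
  · rintro ⟨hu, hinc⟩
    obtain ⟨_, B2, hB2⟩ := hord.2.2.2 2 (by decide)
    rw [e2] at hB2
    have h12 : ¬ (F ∩ F' ⊆ B2 ∩ F'') := by
      have := hinc 1 2 F B2 (by decide) (by decide) (by decide) hbr1 hB2
      rwa [e1, e2] at this
    have h21 : ¬ (B2 ∩ F'' ⊆ F ∩ F') := by
      have := hinc 2 1 B2 F (by decide) (by decide) (by decide) hB2 hbr1
      rwa [e1, e2] at this
    refine ⟨?_, ?_⟩
    · intro h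
      exact h12 (by rw [h]; exact Finset.empty_subset _)
    · intro h
      have hsub : B2 ⊆ F ∪ F' := by
        rcases (hbr2 B2 hB2).1 with rfl | rfl
        · exact Finset.subset_union_left
        · exact Finset.subset_union_right
      have hB2e : B2 ∩ F'' = ∅ := by
        rw [Finset.eq_empty_iff_forall_notMem]
        intro x hx
        have : x ∈ (F ∪ F') ∩ F'' :=
          Finset.mem_inter.mpr ⟨hsub (Finset.mem_inter.mp hx).1, (Finset.mem_inter.mp hx).2⟩
        rw [h] at this
        exact Finset.notMem_empty x this
      exact h21 (by rw [hB2e]; exact Finset.empty_subset _)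
  · rintro ⟨h1, h2⟩
    obtain ⟨x0, hx0⟩ := Finset.nonempty_iff_ne_empty.mpr h1
    obtain ⟨y0, hy0⟩ := Finset.nonempty_iff_ne_empty.mpr h2
    constructor
    · intro i hi
      fin_cases i
      · exact absurd hi (by decide)
      · exact ⟨F, hbr1, fun B hB => hbr1u B hB⟩
      · obtain ⟨_, B0, hB0⟩ := hord.2.2.2 2 (by decide)
        rw [e2] at hB0
        refine ⟨B0, hB0, ?_⟩
        intro B hB
        rcases (hbr2 B hB).1 with hBe | hBe <;> rcases (hbr2 B0 hB0).1 with hB0e | hB0e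
        · rw [hBe, hB0e]
        · exfalso
          apply h2
          apply hkey
          refine Finset.Subset.antisymm ?_ ?_
          · have := (hbr2 B0 hB0).2.2.1; rwa [hB0e] at this
          · have := (hbr2 B hB).2.2.2; rwa [hBe] at this
        · exfalso
          apply h2
          apply hkey
          refine Finset.Subset.antisymm ?_ ?_
          · have := (hbr2 B hB).2.2.1; rwa [hBe] at this
          · have := (hbr2 B0 hB0).2.2.2; rwa [hB0e] at this
        · rw [hBe, hB0e]
    · intro i j Bi Bj hi hj hij hBi hBj
      fin_cases i <;> fin_cases j
      · exact absurd hi (by decide)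
      · exact absurd hi (by decide)
      · exact absurd hi (by decide)
      · exact absurd hj (by decide)
      · exact absurd rfl hij
      · -- i = 1, j = 2
        have hBi' : IsBranch (gen 3 ![F, F', F''] 1) F' Bi := hBi
        have hBj' : IsBranch (gen 3 ![F, F', F''] 2) F'' Bj := hBj
        show ¬ Bi ∩ F' ⊆ Bj ∩ F''
        rw [hbr1u Bi hBi']
        intro hsub
        have hx' := hsub hx0
        rw [Finset.mem_inter] at hx'
        rw [Finset.mem_inter] at hx0
        exact htriple x0 hx0.1 hx0.2 hx'.2
      · exact absurd hj (by decide)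
      · -- i = 2, j = 1
        have hBi' : IsBranch (gen 3 ![F, F', F''] 2) F'' Bi := hBi
        have hBj' : IsBranch (gen 3 ![F, F', F''] 1) F' Bj := hBj
        show ¬ Bi ∩ F'' ⊆ Bj ∩ F'
        rw [hbr1u Bj hBj']
        intro hsub
        have hy' : y0 ∈ Bi ∩ F'' := (hbr2 Bi hBi').2.1 hy0
        have hy'' := hsub hy'
        rw [Finset.mem_inter] at hy'
        rw [Finset.mem_inter] at hy''
        exact htriple y0 hy''.1 hy''.2 hy'.2
      · exact absurd rfl hij
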